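/- arXiv:2306.15145 — 3 statements merged into one kernel-verified Lean document; each statement's English description precedes it below -/
import Mathlib

section
/- In a core input-output network G, the relation σ₁ ⪯ σ₂ on simple nodes — defined by σ₁ ≺ σ₂, or σ₁ = σ₂ super-simple, or σ₁ and σ₂ lying in the same simple subnetwork — is reflexive on simple nodes and transitive, and any two super-simple nodes are comparable (⪯ restricts to a total order on super-simple nodes). -/
/-- A simple (directed) path from `a` to `b`: nonempty node list, consecutive arrows,
no repeated nodes. -/
def IsSPath {V : Type*} (E : V → V → Prop) (a b : V) (p : List V) : Prop :=
  p.Chain' E ∧ p.Nodup ∧ p.head? = some a ∧ p.getLast? = some b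

/-- An `ιo`-simple path. -/
def IoSPath {V : Type*} (E : V → V → Prop) (ι o : V) (p : List V) : Prop :=
  IsSPath E ι o p

/-- A node is simple if it lies on some `ιo`-simple path. -/
def SimpleNode {V : Type*} (E : V → V → Prop) (ι o v : V) : Prop :=
  ∃ p, IoSPath E ι o p ∧ v ∈ p

/-- A node is appendage if it is not simple. -/
def Appendage {V : Type*} (E : V → V → Prop) (ι o v : V) : Prop :=
  ¬ SimpleNode E ι o v

/-- A node is super-simple if it lies on every `ιo`-simple path. -/
def SuperSimple {V : Type*} (E : V → V → Prop) (ι o v : V) : Prop :=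
  ∀ p, IoSPath E ι o p → v ∈ p

/-- A core network: every node is reachable from `ι` and reaches `o`. -/
def Core {V : Type*} (E : V → V → Prop) (ι o : V) : Prop :=
  ∀ v, Relation.ReflTransGen E ι v ∧ Relation.ReflTransGen E v o

/-- `a` occurs (strictly) before `b` on some `ιo`-simple path. -/
def OccBefore {V : Type*} (E : V → V → Prop) (ι o a b : V) : Prop :=
  ∃ p, IoSPath E ι o p ∧ [a, b].Sublist p

/-- Strict partial order on simple nodes induced by super-simple nodes:
`a ≺ b` iff there is a super-simple node `ρ` with `a` (weakly) before `ρ`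
and `ρ` (weakly) before `b` along `ιo`-simple paths, and `a ≠ b`. -/
def SLt {V : Type*} (E : V → V → Prop) (ι o a b : V) : Prop :=
  a ≠ b ∧ ∃ ρ, SuperSimple E ι o ρ ∧ (a = ρ ∨ OccBefore E ι o a ρ) ∧
    (b = ρ ∨ OccBefore E ι o ρ b)

/-- Adjacent (consecutive) super-simple nodes. -/
def AdjSS {V : Type*} (E : V → V → Prop) (ι o ρ ρ' : V) : Prop :=
  SuperSimple E ι o ρ ∧ SuperSimple E ι o ρ' ∧ SLt E ι o ρ ρ' ∧
  ¬ ∃ ρ'', SuperSimple E ι o ρ'' ∧ SLt E ι o ρ ρ'' ∧ SLt E ι o ρ'' ρ'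

/-- The simple subnetwork between adjacent super-simple nodes `ρ ≺ ρ'`. -/
def SimpleSubnet {V : Type*} (E : V → V → Prop) (ι o ρ ρ' : V) : Set V :=
  {σ | SimpleNode E ι o σ ∧ SLt E ι o ρ σ ∧ SLt E ι o σ ρ'}

/-- Two simple nodes lie in the same simple subnetwork. -/
def SameSimpleSubnet {V : Type*} (E : V → V → Prop) (ι o a b : V) : Prop :=
  ∃ ρ ρ', AdjSS E ι o ρ ρ' ∧ a ∈ SimpleSubnet E ι o ρ ρ' ∧
    b ∈ SimpleSubnet E ι o ρ ρ'

/-- `a ⪯ b`: either `a ≺ b`, or `a = b` is super-simple, or `a`, `b` lie in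
the same simple subnetwork. -/
def SLe {V : Type*} (E : V → V → Prop) (ι o a b : V) : Prop :=
  SLt E ι o a b ∨ (a = b ∧ SuperSimple E ι o a) ∨ SameSimpleSubnet E ι o a b

/-- An appendage path from `a` to `b`: a simple path containing an appendage
node, all of whose nodes other than the endpoints are appendage. -/
def AppPath {V : Type*} (E : V → V → Prop) (ι o a b : V) (p : List V) : Prop :=
  IsSPath E a b p ∧ (∃ x ∈ p, Appendage E ι o x) ∧
  ∀ x ∈ p, x ≠ a → x ≠ b → Appendage E ι o x

/-- Reachability inside a set of nodes. -/
def ReachIn {V : Type*} (E : V → V → Prop) (s : Set V) (a b : V) : Prop :=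
  Relation.ReflTransGen (fun x y => E x y ∧ x ∈ s ∧ y ∈ s) a b

/-- `a` and `b` belong to the same transitive (strongly connected) component
of the subnetwork induced on `s`. -/
def SameTCIn {V : Type*} (E : V → V → Prop) (s : Set V) (a b : V) : Prop :=
  a ∈ s ∧ b ∈ s ∧ ReachIn E s a b ∧ ReachIn E s b a

/-- A super-appendage node: an appendage node whose transitive component in
every complementary subnetwork `C_S` consists only of appendage nodes. -/
def SuperAppendage {V : Type*} (E : V → V → Prop) (ι o τ : V) : Prop :=
  Appendage E ι o τ ∧ ∀ p, IoSPath E ι o p → τ ∉ p →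
    ∀ x, SameTCIn E {v | v ∉ p} τ x → Appendage E ι o x

/-- An appendage subnetwork: a transitive component of the subnetwork of
super-appendage nodes. -/
def IsAppSubnet {V : Type*} (E : V → V → Prop) (ι o : V) (A : Set V) : Prop :=
  ∃ τ, SuperAppendage E ι o τ ∧
    A = {x | SameTCIn E {v | SuperAppendage E ι o v} τ x}

/-- There is an appendage path from `σ` to `κ`. -/
def HasAppPathTo {V : Type*} (E : V → V → Prop) (ι o σ κ : V) : Prop :=
  ∃ p, AppPath E ι o σ κ p

/-- `σ = σᵘ(κ)`: if `κ` is simple then `σ = κ`; otherwise `σ` is a minimal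
upstream simple node with an appendage path to `κ`. -/
def IsSigmaU {V : Type*} (E : V → V → Prop) (ι o κ σ : V) : Prop :=
  (SimpleNode E ι o κ ∧ σ = κ) ∨
  (Appendage E ι o κ ∧ SimpleNode E ι o σ ∧ HasAppPathTo E ι o σ κ ∧
    ∀ σ', SimpleNode E ι o σ' → HasAppPathTo E ι o σ' κ → ¬ SLt E ι o σ' σ)

/-- There is an appendage path from some node of `A` to `σ`. -/
def HasAppPathFromSet {V : Type*} (E : V → V → Prop) (ι o : V) (A : Set V)
    (σ : V) : Prop :=
  ∃ τ ∈ A, ∃ p, AppPath E ι o τ σ p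

/-- `σ = σᵈ(A)`: a maximal downstream simple node with an appendage path
from `A`. -/
def IsSigmaD {V : Type*} (E : V → V → Prop) (ι o : V) (A : Set V) (σ : V) : Prop :=
  SimpleNode E ι o σ ∧ HasAppPathFromSet E ι o A σ ∧
    ∀ σ', SimpleNode E ι o σ' → HasAppPathFromSet E ι o A σ' → ¬ SLt E ι o σ σ'

/-- A simple (directed) cycle, given by its list of distinct nodes with a
closing arrow from the last node back to the first. -/
def IsSimpleCycle {V : Type*} (E : V → V → Prop) (c : List V) : Prop :=
  c.Chain' E ∧ c.Nodup ∧ ∃ a b, c.head? = some a ∧ c.getLast? = some b ∧ E b a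

/-- `τ` is a linked appendage node of the simple subnetwork determined by the
adjacent super-simple pair `ρ ≺ ρ'`. -/
def Linked {V : Type*} (E : V → V → Prop) (ι o ρ ρ' τ : V) : Prop :=
  Appendage E ι o τ ∧ ¬ SuperAppendage E ι o τ ∧
  ∃ p, IoSPath E ι o p ∧ τ ∉ p ∧ ∀ x, SameTCIn E {v | v ∉ p} τ x →
    x = τ ∨ x ∈ SimpleSubnet E ι o ρ ρ' ∨
      (Appendage E ι o x ∧ ¬ SuperAppendage E ι o x)

/-- The structural subnetwork determined by adjacent super-simple nodes
`ρ ≺ ρ'`: the two super-simple nodes, the simple subnetwork between them,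
and its linked appendage nodes. -/
def StructuralSet {V : Type*} (E : V → V → Prop) (ι o ρ ρ' : V) : Set V :=
  {ρ, ρ'} ∪ SimpleSubnet E ι o ρ ρ' ∪ {τ | Linked E ι o ρ ρ' τ}

/-- `L` is a structural subnetwork. -/
def IsStructSubnet {V : Type*} (E : V → V → Prop) (ι o : V) (L : Set V) : Prop :=
  ∃ ρ ρ', AdjSS E ι o ρ ρ' ∧ L = StructuralSet E ι o ρ ρ'


-- ===================== auxiliary lemmas =====================
namespace SleAux

variable {V : Type*} {E : V → V → Prop} {ι o : V}

theorem pair_sublist {p : List V} (i j : Fin p.length) (hij : i < j) :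
    ([p.get i, p.get j]).Sublist p := by
  have h1 : p.get i ∈ p.take (i + 1 : ℕ) := by
    rw [List.mem_take_iff_getElem]
    exact ⟨i, by simp [Nat.lt_min.2 ⟨Nat.lt_succ_self _, i.isLt⟩], rfl⟩
  have h2 : p.get j ∈ p.drop (i + 1 : ℕ) := by
    rw [List.mem_iff_getElem]
    refine ⟨j - (i+1), ?_, ?_⟩
    · simp [List.length_drop]; omega
    · rw [List.getElem_drop]; congr 1; omega
  have : List.Sublist ([p.get i] ++ [p.get j]) (p.take (i+1:ℕ) ++ p.drop (i+1:ℕ)) :=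
    List.Sublist.append (List.singleton_sublist.2 h1) (List.singleton_sublist.2 h2)
  simpa [List.take_append_drop] using this

theorem sublist_pair_index {a b : V} : ∀ {p : List V}, ([a, b]).Sublist p →
    ∃ i j : Fin p.length, i < j ∧ p.get i = a ∧ p.get j = b := by
  intro p h
  induction p with
  | nil => simp at h
  | cons x t ih =>
    cases h with
    | cons _ h' =>
      obtain ⟨i, j, hij, ha, hb⟩ := ih h'
      exact ⟨i.succ, j.succ, by simpa using hij, ha, hb⟩
    | cons_cons _ h' =>
      have hb : b ∈ t := List.singleton_sublist.1 h'
      obtain ⟨j, hj⟩ := List.mem_iff_get.1 hb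
      exact ⟨⟨0, Nat.succ_pos _⟩, j.succ, by simp [Fin.lt_def], rfl, hj⟩

theorem sublist_pair_decomp {a b : V} : ∀ {p : List V}, ([a, b]).Sublist p →
    ∃ l₁ l₂ l₃, p = l₁ ++ a :: l₂ ++ b :: l₃ := by
  intro p h
  induction p with
  | nil => simp at h
  | cons x t ih =>
    cases h with
    | cons _ h' =>
      obtain ⟨l₁, l₂, l₃, rfl⟩ := ih h'
      exact ⟨x :: l₁, l₂, l₃, rfl⟩
    | cons_cons _ h' =>
      obtain ⟨l₂, l₃, rfl⟩ := List.append_of_mem (List.singleton_sublist.1 h')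
      exact ⟨[], l₂, l₃, rfl⟩

theorem exists_sPath_of_rtg {r : V → V → Prop} {a b : V}
    (h : Relation.ReflTransGen r a b) : ∃ p, IsSPath r a b p := by
  induction h using Relation.ReflTransGen.head_induction_on with
  | refl => exact ⟨[b], List.isChain_singleton _, List.nodup_singleton _, rfl, rfl⟩
  | head hac hcb ih =>
    rename_i a c
    obtain ⟨p, hc, hn, hh, hl⟩ := ih
    by_cases hm : a ∈ p
    · obtain ⟨s, t, rfl⟩ := List.append_of_mem hm
      refine ⟨a :: t, List.IsChain.suffix hc ⟨s, rfl⟩, hn.sublist (List.sublist_append_right s (a :: t)), rfl, ?_⟩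
      rwa [List.getLast?_append_cons] at hl
    · cases p with
      | nil => simp at hh
      | cons x t =>
        have hx : r a x := by
          have : x = c := by simpa using hh
          rw [this]; exact hac
        exact ⟨a :: x :: t, List.isChain_cons_cons.2 ⟨hx, hc⟩, List.nodup_cons.2 ⟨hm, hn⟩,
          rfl, by rw [List.getLast?_cons_cons]; exact hl⟩

theorem chain_mem {r : V → V → Prop} {Q : V → Prop} (hr : ∀ x y, r x y → Q y) :
    ∀ {a : V} {t : List V}, List.Chain r a t → Q a → ∀ x ∈ a :: t, Q x := by
  intro a t hc
  induction t generalizing a with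
  | nil => intro ha x hx; simp at hx; subst hx; exact ha
  | cons b t ih =>
    intro ha x hx
    have hc' : List.IsChain r (a :: b :: t) := hc
    rw [List.isChain_cons_cons] at hc'
    rcases List.mem_cons.1 hx with rfl | hx
    · exact ha
    · exact ih hc'.2 (hr _ _ hc'.1) x hx

theorem sPath_mem {r : V → V → Prop} {Q : V → Prop} {a b : V} {p : List V}
    (h : IsSPath r a b p) (hQa : Q a) (hr : ∀ x y, r x y → Q y) : ∀ x ∈ p, Q x := by
  obtain ⟨hc, _, hh, _⟩ := h
  cases p with
  | nil => simp at hh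
  | cons x t =>
    obtain rfl : x = a := by simpa using hh
    exact chain_mem hr hc hQa

theorem chain'_and_mem {r : V → V → Prop} {P : V → Prop} :
    ∀ {l : List V}, l.Chain' r → (∀ x ∈ l, P x) → l.Chain' (fun x y => r x y ∧ P y) := by
  intro l
  induction l with
  | nil => intro _ _; exact List.isChain_nil
  | cons x t ih =>
    intro hc hP
    cases t with
    | nil => exact List.isChain_singleton _
    | cons y s =>
      unfold List.Chain' at hc ⊢; rw [List.isChain_cons_cons] at hc ⊢
      exact ⟨⟨hc.1, hP y (by simp)⟩, ih hc.2 (fun z hz => hP z (by simp [hz]))⟩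

theorem chain'_rtg {r : V → V → Prop} {a b : V} {p : List V} (hc : p.Chain' r)
    (hh : p.head? = some a) (hl : p.getLast? = some b) : Relation.ReflTransGen r a b := by
  cases p with
  | nil => simp at hh
  | cons x t =>
    obtain rfl : x = a := by simpa using hh
    refine List.relationReflTransGen_of_exists_isChain_cons t hc ?_
    rwa [List.getLast?_eq_getLast (by simp), Option.some_inj] at hl

/-- The splice lemma: a super-simple node cannot occur strictly before `b` on one
`ιo`-simple path and strictly after `b` on another. -/
theorem key {ρ b : V} {p q : List V} (hρ : SuperSimple E ι o ρ)
    (hp : IoSPath E ι o p) (hq : IoSPath E ι o q)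
    (h1 : ([ρ, b]).Sublist p) (h2 : ([b, ρ]).Sublist q) : False := by
  obtain ⟨p₁, p₂, p₃, hpd⟩ := sublist_pair_decomp h1
  obtain ⟨q₁, q₂, q₃, hqd⟩ := sublist_pair_decomp h2
  rw [List.append_assoc, List.cons_append] at hqd
  subst hpd; subst hqd
  obtain ⟨hpc, hpn, hph, hpl⟩ := hp
  obtain ⟨hqc, hqn, hqh, hql⟩ := hq
  have hqsplit := List.nodup_append.1 hqn
  have hρq₁ : ρ ∉ q₁ := fun h => hqsplit.2.2 ρ h ρ (by simp) rfl
  have hρb : ρ ≠ b := by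
    have hb : b ∉ q₂ ++ ρ :: q₃ := (List.nodup_cons.1 hqsplit.2.1).1
    intro h; exact hb (h ▸ (by simp : ρ ∈ q₂ ++ ρ :: q₃))
  have hpsplit := List.nodup_append.1 hpn
  have hρp₃ : ρ ∉ p₃ :=
    fun h => hpsplit.2.2 ρ (by simp : ρ ∈ p₁ ++ ρ :: p₂) ρ (by simp [h] : ρ ∈ b :: p₃) rfl
  have hwc : (q₁ ++ b :: p₃).Chain' E := by
    rcases List.isChain_append.1 hqc with ⟨hc1, _, hlink⟩
    refine List.isChain_append.2 ⟨hc1, List.IsChain.suffix hpc ⟨p₁ ++ ρ :: p₂, rfl⟩, ?_⟩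
    intro x hx y hy
    exact hlink x hx y (by simpa using hy)
  have hwh : (q₁ ++ b :: p₃).head? = some ι := by
    cases q₁ with
    | nil => simpa using hqh
    | cons z s => simpa using hqh
  have hwl : (q₁ ++ b :: p₃).getLast? = some o := by
    rw [List.getLast?_append_cons]
    rw [List.getLast?_append_cons] at hpl
    exact hpl
  have hwρ : ∀ x ∈ q₁ ++ b :: p₃, x ≠ ρ := by
    intro x hx
    rcases List.mem_append.1 hx with hx | hx
    · exact fun h => hρq₁ (h ▸ hx)
    · rcases List.mem_cons.1 hx with rfl | hx
      · exact fun h => hρb h.symm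
      · exact fun h => hρp₃ (h ▸ hx)
  have hwc' : (q₁ ++ b :: p₃).Chain' (fun x y => E x y ∧ y ≠ ρ) := chain'_and_mem hwc hwρ
  have hιρ : ι ≠ ρ := hwρ ι (List.mem_of_mem_head? (hwh ▸ rfl))
  have hrtg : Relation.ReflTransGen (fun x y => E x y ∧ y ≠ ρ) ι o := chain'_rtg hwc' hwh hwl
  obtain ⟨p', hp'⟩ := exists_sPath_of_rtg hrtg
  have hp'E : IoSPath E ι o p' :=
    ⟨List.IsChain.imp (fun _ _ h => h.1) hp'.1, hp'.2.1, hp'.2.2.1, hp'.2.2.2⟩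
  exact (sPath_mem hp' hιρ (fun x y h => h.2) ρ (hρ p' hp'E)) rfl

theorem occ_ne {a b : V} (h : OccBefore E ι o a b) : a ≠ b := by
  obtain ⟨p, hp, hs⟩ := h
  obtain ⟨i, j, hij, ha, hb⟩ := sublist_pair_index hs
  intro hab
  have : i = j := hp.2.1.get_inj_iff.1 (by rw [ha, hb, hab])
  exact absurd this (ne_of_lt hij)

theorem occ_asymm {ρ b : V} (hρ : SuperSimple E ι o ρ)
    (h1 : OccBefore E ι o ρ b) (h2 : OccBefore E ι o b ρ) : False := by
  obtain ⟨p, hp, hs1⟩ := h1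
  obtain ⟨q, hq, hs2⟩ := h2
  exact key hρ hp hq hs1 hs2

theorem mem_total {a b : V} {p : List V} (hp : IoSPath E ι o p)
    (ha : a ∈ p) (hb : b ∈ p) (hab : a ≠ b) :
    ([a, b]).Sublist p ∨ ([b, a]).Sublist p := by
  obtain ⟨i, hi⟩ := List.mem_iff_get.1 ha
  obtain ⟨j, hj⟩ := List.mem_iff_get.1 hb
  have hij : i ≠ j := fun h => hab (by rw [← hi, ← hj, h])
  rcases lt_or_gt_of_ne hij with h | h
  · exact Or.inl (by rw [← hi, ← hj]; exact pair_sublist i j h)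
  · exact Or.inr (by rw [← hi, ← hj]; exact pair_sublist j i h)

theorem bef_trans_list {a b c : V} {p : List V} (hn : p.Nodup)
    (h1 : ([a, b]).Sublist p) (h2 : ([b, c]).Sublist p) : ([a, c]).Sublist p := by
  obtain ⟨i, j, hij, ha, hb⟩ := sublist_pair_index h1
  obtain ⟨j', k, hjk, hb', hc⟩ := sublist_pair_index h2
  have hjj : j = j' := hn.get_inj_iff.1 (by rw [hb, hb'])
  have hik : i < k := lt_trans hij (hjj ▸ hjk)
  rw [← ha, ← hc]
  exact pair_sublist i k hik

/-- `K1`: pushing a weak-after fact up along the super-simple order. -/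
theorem k1 {ρ σ x : V} (hρ : SuperSimple E ι o ρ) (hσ : SuperSimple E ι o σ)
    (h : ρ = σ ∨ OccBefore E ι o ρ σ) (hx : x = σ ∨ OccBefore E ι o σ x) :
    x = ρ ∨ OccBefore E ι o ρ x := by
  rcases h with rfl | h
  · exact hx
  · rcases hx with rfl | hx
    · exact Or.inr h
    · obtain ⟨q, hq, hsx⟩ := hx
      by_cases hxρ : x = ρ
      · exact Or.inl hxρ
      have hρq : ρ ∈ q := hρ q hq
      have hσq : σ ∈ q := List.Sublist.subset hsx (by simp)
      have hρσ : ρ ≠ σ := occ_ne h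
      rcases mem_total hq hρq hσq hρσ with hgood | hbad
      · exact Or.inr ⟨q, hq, bef_trans_list hq.2.1 hgood hsx⟩
      · exact absurd (occ_asymm hρ h ⟨q, hq, hbad⟩) not_false

/-- `K2`: pushing a weak-before fact down along the super-simple order. -/
theorem k2 {ρ' σ x : V} (hρ' : SuperSimple E ι o ρ') (hσ : SuperSimple E ι o σ)
    (h : σ = ρ' ∨ OccBefore E ι o σ ρ') (hx : x = σ ∨ OccBefore E ι o x σ) :
    x = ρ' ∨ OccBefore E ι o x ρ' := by
  rcases h with rfl | h
  · exact hx
  · rcases hx with rfl | hx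
    · exact Or.inr h
    · obtain ⟨q, hq, hxσ⟩ := hx
      by_cases hxρ : x = ρ'
      · exact Or.inl hxρ
      have hρq : ρ' ∈ q := hρ' q hq
      have hσq : σ ∈ q := List.Sublist.subset hxσ (by simp)
      have hσρ : σ ≠ ρ' := occ_ne h
      rcases mem_total hq hσq hρq hσρ with hgood | hbad
      · exact Or.inr ⟨q, hq, bef_trans_list hq.2.1 hxσ hgood⟩
      · exact absurd (occ_asymm hρ' ⟨q, hq, hbad⟩ h) not_false

/-- `J`: two super-simple nodes bracketing a common node are comparable. -/
theorem jlem {ρ σ x : V} (hρ : SuperSimple E ι o ρ) (hσ : SuperSimple E ι o σ)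
    (hx : x = ρ ∨ OccBefore E ι o ρ x) (hx' : x = σ ∨ OccBefore E ι o x σ) :
    ρ = σ ∨ OccBefore E ι o ρ σ := by
  rcases hx with rfl | hx
  · rcases hx' with rfl | hx'
    · exact Or.inl rfl
    · exact Or.inr hx'
  · rcases hx' with rfl | hx'
    · exact Or.inr hx
    · obtain ⟨q, hq, hxσ⟩ := hx'
      by_cases hρσ : ρ = σ
      · exact Or.inl hρσ
      have hρq : ρ ∈ q := hρ q hq
      have hxq : x ∈ q := List.Sublist.subset hxσ (by simp)
      have hρx : ρ ≠ x := occ_ne hx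
      rcases mem_total hq hρq hxq hρx with hgood | hbad
      · exact Or.inr ⟨q, hq, bef_trans_list hq.2.1 hgood hxσ⟩
      · exact absurd (occ_asymm hρ hx ⟨q, hq, hbad⟩) not_false

theorem ss_antisymm {ρ σ : V} (hρ : SuperSimple E ι o ρ)
    (h1 : ρ = σ ∨ OccBefore E ι o ρ σ) (h2 : σ = ρ ∨ OccBefore E ι o σ ρ) : ρ = σ := by
  rcases h1 with h1 | h1
  · exact h1
  · rcases h2 with h2 | h2
    · exact h2.symm
    · exact absurd (occ_asymm hρ h1 h2) not_false

theorem ss_total {a b : V} (hcore : Core E ι o) (ha : SuperSimple E ι o a)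
    (hb : SuperSimple E ι o b) :
    a = b ∨ OccBefore E ι o a b ∨ OccBefore E ι o b a := by
  obtain ⟨p₀, hp₀⟩ := exists_sPath_of_rtg (hcore ι).2
  by_cases hab : a = b
  · exact Or.inl hab
  · rcases mem_total hp₀ (ha p₀ hp₀) (hb p₀ hp₀) hab with h | h
    · exact Or.inr (Or.inl ⟨p₀, hp₀, h⟩)
    · exact Or.inr (Or.inr ⟨p₀, hp₀, h⟩)

theorem wa_of_slt {ρ x : V} (hρ : SuperSimple E ι o ρ) (h : SLt E ι o ρ x) :
    x = ρ ∨ OccBefore E ι o ρ x := by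
  obtain ⟨hne, σ, hσ, h1, h2⟩ := h
  exact k1 hρ hσ h1 h2

theorem wb_of_slt {ρ' x : V} (hρ' : SuperSimple E ι o ρ') (h : SLt E ι o x ρ') :
    x = ρ' ∨ OccBefore E ι o x ρ' := by
  obtain ⟨hne, σ, hσ, h1, h2⟩ := h
  refine k2 hρ' hσ ?_ h1
  rcases h2 with h2 | h2
  · exact Or.inl h2.symm
  · exact Or.inr h2

theorem ss_slt_occ {a b : V} (ha : SuperSimple E ι o a) (hb : SuperSimple E ι o b)
    (h : SLt E ι o a b) : OccBefore E ι o a b := by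
  rcases wa_of_slt ha h with h' | h'
  · exact absurd h'.symm h.1
  · exact h'

theorem slt_of_ss_occ {a b : V} (ha : SuperSimple E ι o a) (h : OccBefore E ι o a b) :
    SLt E ι o a b :=
  ⟨occ_ne h, a, ha, Or.inl rfl, Or.inr h⟩

theorem ss_iota : SuperSimple E ι o ι :=
  fun p hp => List.mem_of_mem_head? (hp.2.2.1 ▸ rfl)

theorem ss_o : SuperSimple E ι o o :=
  fun p hp => List.mem_of_mem_getLast? (hp.2.2.2 ▸ rfl)

theorem idx_lt {p : List V} (hp : IoSPath E ι o p) {i j : Fin p.length}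
    (hss : SuperSimple E ι o (p.get i) ∨ SuperSimple E ι o (p.get j))
    (hocc : OccBefore E ι o (p.get i) (p.get j)) : i < j := by
  have hne : p.get i ≠ p.get j := occ_ne hocc
  rcases mem_total hp (List.mem_iff_get.2 ⟨i, rfl⟩) (List.mem_iff_get.2 ⟨j, rfl⟩) hne with
    hgood | hbad
  · obtain ⟨i', j', hij, hi', hj'⟩ := sublist_pair_index hgood
    have hii : i' = i := hp.2.1.get_inj_iff.1 (by rw [hi'])
    have hjj : j' = j := hp.2.1.get_inj_iff.1 (by rw [hj'])
    rw [← hii, ← hjj]; exact hij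
  · exfalso
    have hocc' : OccBefore E ι o (p.get j) (p.get i) := ⟨p, hp, hbad⟩
    rcases hss with h | h
    · exact occ_asymm h hocc hocc'
    · exact occ_asymm h hocc' hocc

theorem not_both {e b : V} (he : SuperSimple E ι o e)
    (h1 : b = e ∨ OccBefore E ι o e b) (h2 : b = e ∨ OccBefore E ι o b e)
    (hne : b ≠ e) : False := by
  rcases h1 with h1 | h1
  · exact hne h1
  · rcases h2 with h2 | h2
    · exact hne h2
    · exact occ_asymm he h1 h2

end SleAux
-- ===================== end auxiliary lemmas =====================

open SleAux in
/-- The relation `⪯` is reflexive on simple nodes, transitive (on simple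
nodes), and total on super-simple nodes. -/
theorem sle_order_properties {V : Type*} (E : V → V → Prop) (ι o : V)
    (hcore : Core E ι o) :
    (∀ σ, SimpleNode E ι o σ → SLe E ι o σ σ) ∧
    (∀ a b c, SimpleNode E ι o a → SimpleNode E ι o b → SimpleNode E ι o c →
      SLe E ι o a b → SLe E ι o b c → SLe E ι o a c) ∧
    (∀ ρ ρ', SuperSimple E ι o ρ → SuperSimple E ι o ρ' →
      SLe E ι o ρ ρ' ∨ SLe E ι o ρ' ρ) := by
  classical
  refine ⟨?_, ?_, ?_⟩
  · -- reflexivity on simple nodes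
    intro σ hσ
    by_cases hss : SuperSimple E ι o σ
    · exact Or.inr (Or.inl ⟨rfl, hss⟩)
    have hσ' := hσ
    obtain ⟨p, hp, hmem⟩ := hσ
    obtain ⟨jσ, hjσ⟩ := List.mem_iff_get.1 hmem
    have hlen : 0 < p.length := List.length_pos_iff.2 (by rintro rfl; simp at hmem)
    have hι0 : p.get ⟨0, hlen⟩ = ι := by
      cases p with
      | nil => simp at hlen
      | cons x t => simpa using hp.2.2.1
    have hlast : p.get ⟨p.length - 1, by omega⟩ = o := by
      rw [List.get_length_sub_one]
      have h := hp.2.2.2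
      rw [List.getLast?_eq_getLast (List.length_pos_iff.1 hlen), Option.some_inj] at h
      exact h
    have hσι : σ ≠ ι := fun h => hss (h ▸ ss_iota)
    have hσo : σ ≠ o := fun h => hss (h ▸ ss_o)
    have hj0 : 0 < (jσ : ℕ) := by
      rcases Nat.eq_zero_or_pos (jσ : ℕ) with h | h
      · exact absurd (by rw [← hjσ, ← hι0]; congr 1; exact Fin.ext h) hσι
      · exact h
    have hjN : (jσ : ℕ) < p.length - 1 := by
      have hne : (jσ : ℕ) ≠ p.length - 1 :=
        fun h => hσo (by rw [← hjσ, ← hlast]; congr 1; exact Fin.ext h)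
      have := jσ.isLt
      omega
    set A : Finset (Fin p.length) :=
      Finset.univ.filter (fun i => SuperSimple E ι o (p.get i) ∧ i < jσ) with hA
    set B : Finset (Fin p.length) :=
      Finset.univ.filter (fun i => SuperSimple E ι o (p.get i) ∧ jσ < i) with hB
    have hA0 : (⟨0, hlen⟩ : Fin p.length) ∈ A := by
      rw [hA, Finset.mem_filter]
      exact ⟨Finset.mem_univ _, by rw [hι0]; exact ss_iota, by simpa [Fin.lt_def] using hj0⟩
    have hB0 : (⟨p.length - 1, by omega⟩ : Fin p.length) ∈ B := by
      rw [hB, Finset.mem_filter]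
      exact ⟨Finset.mem_univ _, by rw [hlast]; exact ss_o, by simpa [Fin.lt_def] using hjN⟩
    set iρ := A.max' ⟨_, hA0⟩ with hiρdef
    set iρ' := B.min' ⟨_, hB0⟩ with hiρ'def
    have hiρA : iρ ∈ A := A.max'_mem _
    have hiρ'B : iρ' ∈ B := B.min'_mem _
    rw [hA, Finset.mem_filter] at hiρA
    rw [hB, Finset.mem_filter] at hiρ'B
    obtain ⟨-, hssρ, hltρσ⟩ := hiρA
    obtain ⟨-, hssρ', hltσρ'⟩ := hiρ'B
    have occ1 : OccBefore E ι o (p.get iρ) σ :=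
      ⟨p, hp, by rw [← hjσ]; exact pair_sublist iρ jσ hltρσ⟩
    have occ2 : OccBefore E ι o σ (p.get iρ') :=
      ⟨p, hp, by rw [← hjσ]; exact pair_sublist jσ iρ' hltσρ'⟩
    have occ3 : OccBefore E ι o (p.get iρ) (p.get iρ') :=
      ⟨p, hp, pair_sublist iρ iρ' (lt_trans hltρσ hltσρ')⟩
    have hρσ : p.get iρ ≠ σ := fun h => hss (h ▸ hssρ)
    have hσρ' : σ ≠ p.get iρ' := fun h => hss (by rw [h]; exact hssρ')
    have slt1 : SLt E ι o (p.get iρ) σ := ⟨hρσ, _, hssρ, Or.inl rfl, Or.inr occ1⟩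
    have slt2 : SLt E ι o σ (p.get iρ') := ⟨hσρ', _, hssρ', Or.inr occ2, Or.inl rfl⟩
    have slt3 : SLt E ι o (p.get iρ) (p.get iρ') :=
      ⟨occ_ne occ3, _, hssρ, Or.inl rfl, Or.inr occ3⟩
    have hno : ¬ ∃ ρ'', SuperSimple E ι o ρ'' ∧ SLt E ι o (p.get iρ) ρ'' ∧
        SLt E ι o ρ'' (p.get iρ') := by
      rintro ⟨ρ'', hss'', hlt1, hlt2⟩
      have hocc1 : OccBefore E ι o (p.get iρ) ρ'' := ss_slt_occ hssρ hss'' hlt1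
      have hocc2 : OccBefore E ι o ρ'' (p.get iρ') := ss_slt_occ hss'' hssρ' hlt2
      obtain ⟨k, hk⟩ := List.mem_iff_get.1 (hss'' p hp)
      have h1k : iρ < k :=
        idx_lt hp (Or.inl hssρ) (by rw [hk]; exact hocc1)
      have h2k : k < iρ' :=
        idx_lt hp (Or.inr hssρ') (by rw [hk]; exact hocc2)
      have hkj : k ≠ jσ := fun h => hss (by rw [← hjσ, ← h, hk]; exact hss'')
      rcases lt_or_gt_of_ne hkj with h | h
      · have hkA : k ∈ A := by
          rw [hA, Finset.mem_filter]
          exact ⟨Finset.mem_univ _, by rw [hk]; exact hss'', h⟩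
        exact absurd h1k (not_lt.2 (A.le_max' k hkA))
      · have hkB : k ∈ B := by
          rw [hB, Finset.mem_filter]
          exact ⟨Finset.mem_univ _, by rw [hk]; exact hss'', h⟩
        exact absurd h2k (not_lt.2 (B.min'_le k hkB))
    refine Or.inr (Or.inr ⟨p.get iρ, p.get iρ', ⟨hssρ, hssρ', slt3, hno⟩, ?_, ?_⟩) <;>
      exact ⟨hσ', slt1, slt2⟩
  · -- transitivity
    intro a b c hsa hsb hsc hab hbc
    rcases hab with h1 | ⟨rfl, -⟩ | ⟨ρ, ρ', hadj, haS, hbS⟩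
    · rcases hbc with h2 | ⟨rfl, -⟩ | ⟨ρ₂, ρ₂', hadj₂, hbS₂, hcS₂⟩
      · -- (≺, ≺)
        obtain ⟨hne1, ρ₁, hss1, hWB1, hWA1⟩ := h1
        obtain ⟨hne2, ρ₂, hss2, hWB2, hWA2⟩ := h2
        have h12 : ρ₁ = ρ₂ ∨ OccBefore E ι o ρ₁ ρ₂ := jlem hss1 hss2 hWA1 hWB2
        by_cases hac : a = c
        · subst hac
          have h21 : ρ₂ = ρ₁ ∨ OccBefore E ι o ρ₂ ρ₁ := jlem hss2 hss1 hWA2 hWB1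
          obtain rfl : ρ₁ = ρ₂ := ss_antisymm hss1 h12 h21
          rcases hWB1 with rfl | hocc1
          · exact Or.inr (Or.inl ⟨rfl, hss1⟩)
          · rcases hWA2 with rfl | hocc2
            · exact Or.inr (Or.inl ⟨rfl, hss1⟩)
            · exact (occ_asymm hss1 hocc2 hocc1).elim
        · exact Or.inl ⟨hac, ρ₁, hss1, hWB1, k1 hss1 hss2 h12 hWA2⟩
      · exact Or.inl h1
      · -- (≺, same subnet)
        obtain ⟨hne1, ρ₁, hss1, hWB1, hWA1⟩ := h1
        have SSρ := hadj₂.1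
        have SSρ' := hadj₂.2.1
        have hbρ' : SLt E ι o b ρ₂' := hbS₂.2.2
        have hρc : SLt E ι o ρ₂ c := hcS₂.2.1
        have hWBρ'b : b = ρ₂' ∨ OccBefore E ι o b ρ₂' := wb_of_slt SSρ' hbρ'
        have h1ρ' : ρ₁ = ρ₂' ∨ OccBefore E ι o ρ₁ ρ₂' := jlem hss1 SSρ' hWA1 hWBρ'b
        have hcase : ρ₁ = ρ₂ ∨ OccBefore E ι o ρ₁ ρ₂ := by
          rcases ss_total hcore hss1 SSρ with h | h | h
          · exact Or.inl h
          · exact Or.inr h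
          · exfalso
            have hne1' : ρ₁ ≠ ρ₂' := by
              rintro rfl
              exact not_both SSρ' hWA1 hWBρ'b hbρ'.1
            exact hadj₂.2.2.2 ⟨ρ₁, hss1, slt_of_ss_occ SSρ h,
              slt_of_ss_occ hss1 (h1ρ'.resolve_left hne1')⟩
        have hWBa : a = ρ₂ ∨ OccBefore E ι o a ρ₂ := k2 SSρ hss1 hcase hWB1
        have hWAc : c = ρ₂ ∨ OccBefore E ι o ρ₂ c := wa_of_slt SSρ hρc
        have hac : a ≠ c := by
          rintro rfl
          rcases hWBa with h' | h'
          · exact hρc.1 h'.symm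
          · rcases hWAc with h'' | h''
            · exact hρc.1 h''.symm
            · exact occ_asymm SSρ h'' h'
        exact Or.inl ⟨hac, ρ₂, SSρ, hWBa, hWAc⟩
    · exact hbc
    · rcases hbc with h2 | ⟨rfl, -⟩ | ⟨ρ₂, ρ₂', hadj₂, hbS₂, hcS₂⟩
      · -- (same subnet, ≺)
        obtain ⟨hne2, ρ₂, hss2, hWB2, hWA2⟩ := h2
        have SSρ := hadj.1
        have SSρ' := hadj.2.1
        have hρb : SLt E ι o ρ b := hbS.2.1
        have haρ' : SLt E ι o a ρ' := haS.2.2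
        have hWAρb : b = ρ ∨ OccBefore E ι o ρ b := wa_of_slt SSρ hρb
        have hρρ₂ : ρ = ρ₂ ∨ OccBefore E ι o ρ ρ₂ := jlem SSρ hss2 hWAρb hWB2
        have hcase : ρ' = ρ₂ ∨ OccBefore E ι o ρ' ρ₂ := by
          rcases ss_total hcore SSρ' hss2 with h | h | h
          · exact Or.inl h
          · exact Or.inr h
          · exfalso
            have hneρρ₂ : ρ ≠ ρ₂ := by
              rintro rfl
              exact not_both SSρ hWAρb hWB2 (fun h' => hρb.1 h'.symm)
            exact hadj.2.2.2 ⟨ρ₂, hss2, slt_of_ss_occ SSρ (hρρ₂.resolve_left hneρρ₂),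
              slt_of_ss_occ hss2 h⟩
        have hWAρ'c : c = ρ' ∨ OccBefore E ι o ρ' c := k1 SSρ' hss2 hcase hWA2
        have hWBρ'a : a = ρ' ∨ OccBefore E ι o a ρ' := wb_of_slt SSρ' haρ'
        have hac : a ≠ c := by
          rintro rfl
          rcases hWAρ'c with h' | h'
          · exact haρ'.1 h'
          · rcases hWBρ'a with h'' | h''
            · exact haρ'.1 h''
            · exact occ_asymm SSρ' h' h''
        exact Or.inl ⟨hac, ρ', SSρ', hWBρ'a, hWAρ'c⟩
      · exact Or.inr (Or.inr ⟨ρ, ρ', hadj, haS, hbS⟩)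
      · -- (same subnet, same subnet)
        have SSρ := hadj.1
        have SSρ' := hadj.2.1
        have SSρ₂ := hadj₂.1
        have SSρ₂' := hadj₂.2.1
        have hWAρb : b = ρ ∨ OccBefore E ι o ρ b := wa_of_slt SSρ hbS.2.1
        have hWBρ'b : b = ρ' ∨ OccBefore E ι o b ρ' := wb_of_slt SSρ' hbS.2.2
        have hWAρ₂b : b = ρ₂ ∨ OccBefore E ι o ρ₂ b := wa_of_slt SSρ₂ hbS₂.2.1
        have hWBρ₂'b : b = ρ₂' ∨ OccBefore E ι o b ρ₂' := wb_of_slt SSρ₂' hbS₂.2.2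
        have hρρ₂' : ρ = ρ₂' ∨ OccBefore E ι o ρ ρ₂' := jlem SSρ SSρ₂' hWAρb hWBρ₂'b
        have hρ₂ρ' : ρ₂ = ρ' ∨ OccBefore E ι o ρ₂ ρ' := jlem SSρ₂ SSρ' hWAρ₂b hWBρ'b
        have hρρ' : ρ = ρ' ∨ OccBefore E ι o ρ ρ' := jlem SSρ SSρ' hWAρb hWBρ'b
        have hneρρ' : ρ ≠ ρ' := by
          rintro rfl
          exact not_both SSρ hWAρb hWBρ'b (fun h' => (hbS.2.1).1 h'.symm)
        have hneρρ₂' : ρ ≠ ρ₂' := by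
          rintro rfl
          exact not_both SSρ hWAρb hWBρ₂'b (fun h' => (hbS.2.1).1 h'.symm)
        have hneρ₂ρ' : ρ₂ ≠ ρ' := by
          rintro rfl
          exact not_both SSρ₂ hWAρ₂b hWBρ'b (fun h' => (hbS₂.2.1).1 h'.symm)
        obtain rfl : ρ = ρ₂ := by
          rcases ss_total hcore SSρ SSρ₂ with h | h | h
          · exact h
          · exact absurd (hadj.2.2.2 ⟨ρ₂, SSρ₂, slt_of_ss_occ SSρ h,
              slt_of_ss_occ SSρ₂ (hρ₂ρ'.resolve_left hneρ₂ρ')⟩) not_false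
          · exact absurd (hadj₂.2.2.2 ⟨ρ, SSρ, slt_of_ss_occ SSρ₂ h,
              slt_of_ss_occ SSρ (hρρ₂'.resolve_left hneρρ₂')⟩) not_false
        obtain rfl : ρ' = ρ₂' := by
          rcases ss_total hcore SSρ' SSρ₂' with h | h | h
          · exact h
          · exact absurd (hadj₂.2.2.2 ⟨ρ', SSρ',
              ⟨hneρρ', ρ, SSρ, Or.inl rfl, Or.inr (hρρ'.resolve_left hneρρ')⟩,
              slt_of_ss_occ SSρ' h⟩) not_false
          · exact absurd (hadj.2.2.2 ⟨ρ₂', SSρ₂',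
              slt_of_ss_occ SSρ (hρρ₂'.resolve_left hneρρ₂'),
              slt_of_ss_occ SSρ₂' h⟩) not_false
        exact Or.inr (Or.inr ⟨ρ, ρ', hadj, haS, hcS₂⟩)
  · -- totality on super-simple nodes
    intro ρ ρ' h h'
    rcases ss_total hcore h h' with rfl | hocc | hocc
    · exact Or.inl (Or.inr (Or.inl ⟨rfl, h⟩))
    · exact Or.inl (Or.inl (slt_of_ss_occ h hocc))
    · exact Or.inr (Or.inl (slt_of_ss_occ h' hocc))
end

section
/- Let G be a core input-output network and A an appendage subnetwork with an appendage path from a simple node σᵘ(A) to A and from A to a simple node σᵈ(A). Then there is no ιo-simple path passing through any node of A; equivalently, concatenating a simple path ι ⇝ σ with an appendage path σ ⇝ A ⇝ σ' and a simple path σ' ⇝ o where σ ≺ σ' would make the nodes of A simple, a contradiction. Formally: for any simple nodes σ, σ' with appendage paths σ ⇝ A and A ⇝ σ', it is not the case that σ ≺ σ'. -/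
namespace NFAO

open List

variable {V : Type*} {E : V → V → Prop} {a b c d x : V} {l l₁ l₂ : List V}

lemma mem_of_getLast? (h : l.getLast? = some b) : b ∈ l := by
  induction l with
  | nil => simp at h
  | cons a t ih =>
    cases t with
    | nil => simp_all
    | cons c t' =>
      rw [List.getLast?_cons_cons] at h
      exact List.mem_cons_of_mem _ (ih h)

lemma spath_ne_nil (h : IsSPath E a b l) : l ≠ [] := by
  rintro rfl; simp [IsSPath] at h

lemma spath_head_mem (h : IsSPath E a b l) : a ∈ l :=
  List.mem_of_mem_head? (by rw [h.2.2.1]; rfl)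

lemma spath_last_mem (h : IsSPath E a b l) : b ∈ l :=
  mem_of_getLast? h.2.2.2

/-- split a list at the first occurrence of a member -/
lemma split_first (h : x ∈ l) : ∃ s t, l = s ++ x :: t ∧ x ∉ s := by
  induction l with
  | nil => simp at h
  | cons y ys ih =>
    by_cases hxy : x = y
    · exact ⟨[], ys, by simp [hxy], by simp⟩
    · obtain ⟨s, t, rfl, hxs⟩ := ih (by
        rcases List.mem_cons.mp h with h' | h'
        · exact absurd h' hxy
        · exact h')
      exact ⟨y :: s, t, by simp, by simp [hxs, hxy]⟩

/-- split l₁ at the first element that also belongs to l₂ -/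
lemma first_inter (h : ∃ y ∈ l₁, y ∈ l₂) :
    ∃ s y t, l₁ = s ++ y :: t ∧ y ∈ l₂ ∧ ∀ z ∈ s, z ∉ l₂ := by
  classical
  induction l₁ with
  | nil => simp at h
  | cons w ws ih =>
    by_cases hw : w ∈ l₂
    · exact ⟨[], w, ws, by simp, hw, by simp⟩
    · obtain ⟨y, hy1, hy2⟩ := h
      rcases List.mem_cons.mp hy1 with rfl | hy1
      · exact absurd hy2 hw
      · obtain ⟨s, y', t, rfl, h1, h2⟩ := ih ⟨y, hy1, hy2⟩
        refine ⟨w :: s, y', t, by simp, h1, ?_⟩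
        intro z hz
        rcases List.mem_cons.mp hz with rfl | hz
        · exact hw
        · exact h2 z hz

lemma spath_prefix {s t : List V} (h : IsSPath E a b (s ++ x :: t)) :
    IsSPath E a x (s ++ [x]) := by
  obtain ⟨hc, hn, hh, _⟩ := h
  have heq : s ++ x :: t = (s ++ [x]) ++ t := by simp
  rw [heq] at hc hn hh
  refine ⟨(List.isChain_append.mp hc).1, (List.nodup_append'.mp hn).1, ?_, ?_⟩
  · rw [List.head?_append] at hh ⊢
    cases s with
    | nil => simpa using hh
    | cons w ws => simpa using hh
  · simp

lemma spath_suffix {s t : List V} (h : IsSPath E a b (s ++ x :: t)) :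
    IsSPath E x b (x :: t) := by
  obtain ⟨hc, hn, _, hl⟩ := h
  refine ⟨(List.isChain_append.mp hc).2.1, (List.nodup_append'.mp hn).2.1, rfl, ?_⟩
  rw [List.getLast?_append] at hl
  cases t with
  | nil => simpa using hl
  | cons w ws => simpa [List.getLast?_cons_cons] using hl

/-- glue two simple paths at the common endpoint, given nodup of the result -/
lemma spath_append {m : V} {t : List V} (h1 : IsSPath E a m l₁)
    (h2 : IsSPath E m d (m :: t)) (hnd : (l₁ ++ t).Nodup) :
    IsSPath E a d (l₁ ++ t) := by
  refine ⟨?_, hnd, ?_, ?_⟩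
  · refine List.isChain_append.mpr ?_
    refine ⟨h1.1, (List.isChain_cons.mp h2.1).2, ?_⟩
    intro u hu v hv
    rw [h1.2.2.2] at hu
    cases hu
    exact (List.isChain_cons.mp h2.1).1 v hv
  · rw [List.head?_append, h1.2.2.1]; rfl
  · rw [List.getLast?_append]
    cases t with
    | nil =>
      have := h2.2.2.2; simp at this
      simp [h1.2.2.2, this]
    | cons w ws =>
      have := h2.2.2.2
      rw [List.getLast?_cons_cons] at this
      simp [this]

/-- Merge two simple paths at their first intersection point. -/
lemma merge (h1 : IsSPath E a b l₁) (h2 : IsSPath E c d l₂)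
    (hx : ∃ y ∈ l₁, y ∈ l₂) :
    ∃ r y, IsSPath E a d r ∧ y ∈ r ∧ y ∈ l₁ ∧ y ∈ l₂ ∧
      ∀ z ∈ r, (z ∈ l₁ ∧ (z = b → b ∈ l₂)) ∨ (z ∈ l₂ ∧ (z = c → c ∈ l₁)) := by
  obtain ⟨s, y, t, rfl, hyl₂, hs⟩ := first_inter hx
  obtain ⟨s₂, t₂, hl₂, _⟩ := split_first hyl₂
  have hpre : IsSPath E a y (s ++ [y]) := spath_prefix h1
  have hsuf : IsSPath E y d (y :: t₂) := spath_suffix (hl₂ ▸ h2)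
  have hnt₂ : (y :: t₂).Nodup := hsuf.2.1
  have hyt₂ : y ∉ t₂ := by simpa using (List.nodup_cons.mp hnt₂).1
  have hnd : ((s ++ [y]) ++ t₂).Nodup := by
    rw [List.nodup_append']
    refine ⟨hpre.2.1, (List.nodup_cons.mp hnt₂).2, ?_⟩
    intro z hz hz2
    have hz2' : z ∈ l₂ := by rw [hl₂]; exact List.mem_append_right _ (List.mem_cons_of_mem _ hz2)
    rcases List.mem_append.mp hz with hz | hz
    · exact hs z hz hz2'
    · simp at hz; subst hz; exact hyt₂ hz2
  have hr : IsSPath E a d ((s ++ [y]) ++ t₂) := spath_append hpre hsuf hnd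
  -- b is the last of l₁ : it lies in y :: t
  have hb_mem : b ∈ y :: t := by
    have := h1.2.2.2
    rw [show s ++ y :: t = s ++ (y :: t) by simp, List.getLast?_append] at this
    cases' ht : (y :: t).getLast? with w
    · simp at ht
    · rw [ht] at this; simp at this; subst this; exact mem_of_getLast? ht
  have hdisj : List.Disjoint s (y :: t) := (List.nodup_append'.mp
    (by simpa using h1.2.1 : (s ++ (y :: t)).Nodup)).2.2
  -- c is the head of l₂ : it is not in t₂ (unless contradiction)
  have hc_not_t₂ : c ∉ t₂ := by
    intro hct
    have hh := h2.2.2.1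
    rw [hl₂] at hh
    have hn₂ : (s₂ ++ y :: t₂).Nodup := by rw [← hl₂]; exact h2.2.1
    cases s₂ with
    | nil =>
      simp at hh; subst hh; exact hyt₂ hct
    | cons w ws =>
      simp at hh; subst hh
      have : List.Disjoint (w :: ws) (y :: t₂) := (List.nodup_append'.mp hn₂).2.2
      exact this (List.mem_cons_self) (List.mem_cons_of_mem _ hct)
  refine ⟨(s ++ [y]) ++ t₂, y, hr, by simp, by simp, hyl₂, ?_⟩
  intro z hz
  rcases List.mem_append.mp hz with hz | hz
  · rcases List.mem_append.mp hz with hz | hz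
    · -- z ∈ s
      left
      refine ⟨List.mem_append_left _ hz, ?_⟩
      rintro rfl
      exact absurd hb_mem (fun hb => hdisj hz hb)
    · -- z = y
      simp at hz; subst hz
      exact Or.inl ⟨by simp, fun hb => hb ▸ hyl₂⟩
  · -- z ∈ t₂
    right
    refine ⟨by rw [hl₂]; exact List.mem_append_right _ (List.mem_cons_of_mem _ hz), ?_⟩
    rintro rfl
    exact absurd hz hc_not_t₂

/-- Positions: if [x,y] is a sublist of a nodup list split at the first x,
then y is in the tail. -/
lemma after_first {y : V} : ∀ s t : List V, (s ++ x :: t).Nodup →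
    [x, y] <+ s ++ x :: t → y ∈ t := by
  intro s
  induction s with
  | nil =>
    intro t hn h
    cases h with
    | cons _ h => exact h.subset (by simp)
    | cons_cons _ h => exact h.subset (by simp)
  | cons w s' ih =>
    intro t hn h
    have hxw : x ≠ w := by
      intro hxw; subst hxw
      have : x ∉ s' ++ x :: t := (List.nodup_cons.mp hn).1
      exact this (by simp)
    cases h with
    | cons _ h => exact ih t (List.nodup_cons.mp hn).2 h
    | cons_cons _ h => exact absurd rfl hxw

lemma before_second {y : V} : ∀ s t : List V, (s ++ y :: t).Nodup →
    [x, y] <+ s ++ y :: t → x ∈ s := by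
  intro s
  induction s with
  | nil =>
    intro t hn h
    exfalso
    have hy : y ∉ t := (List.nodup_cons.mp hn).1
    cases h with
    | cons _ h => exact hy (h.subset (by simp))
    | cons_cons _ h => exact hy (h.subset (by simp))
  | cons w s' ih =>
    intro t hn h
    cases h with
    | cons _ h => exact List.mem_cons_of_mem _ (ih t (List.nodup_cons.mp hn).2 h)
    | cons_cons _ h => exact List.mem_cons_self

/-- Extract a simple path from reflexive-transitive reachability; every node is
either the start or the target of a relation step. -/
lemma exists_spath_of_rtg {r : V → V → Prop} (h : Relation.ReflTransGen r a b) :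
    ∃ l, IsSPath r a b l ∧ ∀ z ∈ l, z = a ∨ ∃ w, r w z := by
  classical
  induction h using Relation.ReflTransGen.head_induction_on with
  | refl => exact ⟨[b], ⟨List.isChain_singleton _, by simp, rfl, rfl⟩, by simp⟩
  | head hac _ ih =>
    rename_i a' c' _
    obtain ⟨l, hl, hmem⟩ := ih
    by_cases ha : a' ∈ l
    · obtain ⟨s, t, rfl, _⟩ := split_first ha
      refine ⟨a' :: t, spath_suffix hl, ?_⟩
      intro z hz
      rcases List.mem_cons.mp hz with rfl | hz
      · exact Or.inl rfl
      · rcases hmem z (List.mem_append_right _ (List.mem_cons_of_mem _ hz)) with h | h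
        · exact Or.inr ⟨a', by rw [h]; exact hac⟩
        · exact Or.inr h
    · refine ⟨a' :: l, ⟨?_, by simp [hl.2.1, ha], rfl, ?_⟩, ?_⟩
      · refine List.isChain_cons.mpr ?_
        refine ⟨?_, hl.1⟩
        intro w hw
        rw [hl.2.2.1] at hw; cases hw; exact hac
      · rw [show a' :: l = [a'] ++ l by simp, List.getLast?_append, hl.2.2.2]; rfl
      · intro z hz
        rcases List.mem_cons.mp hz with rfl | hz
        · exact Or.inl rfl
        · rcases hmem z hz with h | h
          · exact Or.inr ⟨a', by rw [h]; exact hac⟩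
          · exact Or.inr h

end NFAO


/-- For simple nodes `σ, σ'` with appendage paths `σ ⇝ A` and `A ⇝ σ'`, it is
not the case that `σ ≺ σ'`. -/
theorem no_forward_appendage_order {V : Type*} (E : V → V → Prop) (ι o : V)
    (hcore : Core E ι o) (A : Set V) (hA : IsAppSubnet E ι o A) (σ σ' : V)
    (h1 : SimpleNode E ι o σ) (h2 : SimpleNode E ι o σ')
    (hto : ∃ τ ∈ A, ∃ p, AppPath E ι o σ τ p)
    (hfrom : ∃ τ ∈ A, ∃ p, AppPath E ι o τ σ' p) :
    ¬ SLt E ι o σ σ' := by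
  classical
  rintro ⟨hne, ρ, hρss, hσρ, hρσ'⟩
  obtain ⟨τ₁, hτ₁A, pa, hpa⟩ := hto
  obtain ⟨τ₂, hτ₂A, pb, hpb⟩ := hfrom
  obtain ⟨τ₀, hτ₀, rfl⟩ := hA
  have hτ₁ : SameTCIn E {v | SuperAppendage E ι o v} τ₀ τ₁ := hτ₁A
  have hτ₂ : SameTCIn E {v | SuperAppendage E ι o v} τ₀ τ₂ := hτ₂A
  have hτ₁S : SuperAppendage E ι o τ₁ := hτ₁.2.1
  have hτ₂S : SuperAppendage E ι o τ₂ := hτ₂.2.1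
  -- an initial segment `ι ⇝ σ` avoiding `ρ` (except possibly at `σ` itself)
  have claimA : ∃ P1, IsSPath E ι σ P1 ∧ (∀ z ∈ P1, SimpleNode E ι o z) ∧
      (ρ ∈ P1 → ρ = σ) := by
    rcases hσρ with rfl | ⟨p, hp, hsub⟩
    · obtain ⟨p, hp, hmem⟩ := h1
      obtain ⟨s, t, rfl, -⟩ := NFAO.split_first hmem
      refine ⟨s ++ [σ], NFAO.spath_prefix hp, ?_, fun _ => rfl⟩
      intro z hz
      refine ⟨_, hp, ?_⟩
      rcases List.mem_append.mp hz with h | h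
      · exact List.mem_append_left _ h
      · simp at h; subst h; simp
    · have hσp : σ ∈ p := hsub.subset (by simp)
      obtain ⟨s, t, rfl, hσs⟩ := NFAO.split_first hσp
      have hρt : ρ ∈ t := NFAO.after_first s t hp.2.1 hsub
      have hρnot : ρ ∉ s ++ [σ] := by
        have hnd : ((s ++ [σ]) ++ t).Nodup := by simpa using hp.2.1
        intro h; exact (List.nodup_append'.mp hnd).2.2 h hρt
      refine ⟨s ++ [σ], NFAO.spath_prefix hp, ?_, fun h => absurd h hρnot⟩
      intro z hz
      refine ⟨_, hp, ?_⟩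
      rcases List.mem_append.mp hz with h | h
      · exact List.mem_append_left _ h
      · simp at h; subst h; simp
  -- a final segment `σ' ⇝ o` avoiding `ρ` (except possibly at `σ'` itself)
  have claimB : ∃ P5, IsSPath E σ' o P5 ∧ (∀ z ∈ P5, SimpleNode E ι o z) ∧
      (ρ ∈ P5 → ρ = σ') := by
    rcases hρσ' with rfl | ⟨q, hq, hsub⟩
    · obtain ⟨q, hq, hmem⟩ := h2
      obtain ⟨s, t, rfl, -⟩ := NFAO.split_first hmem
      refine ⟨σ' :: t, NFAO.spath_suffix hq, ?_, fun _ => rfl⟩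
      intro z hz
      exact ⟨_, hq, List.mem_append_right _ hz⟩
    · have hσq : σ' ∈ q := hsub.subset (by simp)
      obtain ⟨s, t, rfl, hσs⟩ := NFAO.split_first hσq
      have hρs : ρ ∈ s := NFAO.before_second s t hq.2.1 hsub
      have hρnot : ρ ∉ σ' :: t := by
        have hnd : (s ++ σ' :: t).Nodup := hq.2.1
        intro h; exact (List.nodup_append'.mp hnd).2.2 hρs h
      refine ⟨σ' :: t, NFAO.spath_suffix hq, ?_, fun h => absurd h hρnot⟩
      intro z hz
      exact ⟨_, hq, List.mem_append_right _ hz⟩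
  obtain ⟨P1, hP1, hP1s, hP1ρ⟩ := claimA
  obtain ⟨P5, hP5, hP5s, hP5ρ⟩ := claimB
  by_cases hint : ∃ y ∈ P1, y ∈ P5
  · -- `P1` and `P5` intersect: a merged `ιo`-simple path avoids `ρ`
    obtain ⟨r, y, hr, -, -, -, hchar⟩ := NFAO.merge hP1 hP5 hint
    have hρr : ρ ∈ r := hρss r hr
    rcases hchar ρ hρr with ⟨hm, himp⟩ | ⟨hm, himp⟩
    · have hρσ : ρ = σ := hP1ρ hm
      have h5 : ρ ∈ P5 := by rw [hρσ]; exact himp hρσ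
      exact hne (hρσ.symm.trans (hP5ρ h5))
    · have hρσ'' : ρ = σ' := hP5ρ hm
      have h1' : ρ ∈ P1 := by rw [hρσ'']; exact himp hρσ''
      exact hne ((hP1ρ h1').symm.trans hρσ'')
  · -- `P1` and `P5` disjoint: build an `ιo`-simple path through an appendage node
    have hreach : ReachIn E {v | SuperAppendage E ι o v} τ₁ τ₂ :=
      Relation.ReflTransGen.trans hτ₁.2.2.2 hτ₂.2.2.1
    obtain ⟨w, hw, hwmem⟩ := NFAO.exists_spath_of_rtg hreach
    have hwE : IsSPath E τ₁ τ₂ w := ⟨hw.1.imp (fun _ _ h => h.1), hw.2⟩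
    have hwApp : ∀ z ∈ w, Appendage E ι o z := by
      intro z hz
      rcases hwmem z hz with rfl | ⟨y, hy⟩
      · exact hτ₁S.1
      · exact hy.2.2.1
    have hpaApp : ∀ z ∈ pa, z = σ ∨ Appendage E ι o z := by
      intro z hz
      by_cases h' : z = σ
      · exact Or.inl h'
      · by_cases h'' : z = τ₁
        · exact Or.inr (h'' ▸ hτ₁S.1)
        · exact Or.inr (hpa.2.2 z hz h' h'')
    have hpbApp : ∀ z ∈ pb, z = σ' ∨ Appendage E ι o z := by
      intro z hz
      by_cases h' : z = σ'
      · exact Or.inl h'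
      · by_cases h'' : z = τ₂
        · exact Or.inr (h'' ▸ hτ₂S.1)
        · exact Or.inr (hpb.2.2 z hz h'' h')
    obtain ⟨m1, -, hm1, -, -, -, hchar1⟩ := NFAO.merge hpa.1 hwE
      ⟨τ₁, NFAO.spath_last_mem hpa.1, NFAO.spath_head_mem hwE⟩
    have hm1App : ∀ z ∈ m1, z = σ ∨ Appendage E ι o z := by
      intro z hz
      rcases hchar1 z hz with ⟨h', -⟩ | ⟨h', -⟩
      · exact hpaApp z h'
      · exact Or.inr (hwApp z h')
    obtain ⟨M, x, hM, hxM, hxm1, hxpb, hcharM⟩ := NFAO.merge hm1 hpb.1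
      ⟨τ₂, NFAO.spath_last_mem hm1, NFAO.spath_head_mem hpb.1⟩
    have hMApp : ∀ z ∈ M, z = σ ∨ z = σ' ∨ Appendage E ι o z := by
      intro z hz
      rcases hcharM z hz with ⟨h', -⟩ | ⟨h', -⟩
      · rcases hm1App z h' with h | h
        exacts [Or.inl h, Or.inr (Or.inr h)]
      · rcases hpbApp z h' with h | h
        exacts [Or.inr (Or.inl h), Or.inr (Or.inr h)]
    have hxσ : x ≠ σ := by
      rintro rfl
      rcases hpbApp x hxpb with h' | h'
      · exact hne h'
      · exact h' h1
    have hxσ' : x ≠ σ' := by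
      rintro rfl
      rcases hm1App x hxm1 with h' | h'
      · exact hne h'.symm
      · exact h' h2
    have hxApp : Appendage E ι o x := by
      rcases hm1App x hxm1 with h | h
      · exact absurd h hxσ
      · exact h
    -- decompose M = σ :: mid ++ [σ']
    obtain ⟨M₀, rfl⟩ : ∃ M₀, M = σ :: M₀ := by
      cases M with
      | nil => exact absurd hM.2.2.1 (by simp)
      | cons u M₀ =>
        have hu : u = σ := by have := hM.2.2.1; simpa using this
        exact ⟨M₀, by rw [hu]⟩
    have hM₀ne : M₀ ≠ [] := by
      rintro rfl
      have := hM.2.2.2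
      simp at this
      exact hne this
    have hlast? : M₀.getLast? = some σ' := by
      cases M₀ with
      | nil => exact absurd rfl hM₀ne
      | cons v M₁ => have := hM.2.2.2; rwa [List.getLast?_cons_cons] at this
    have hglv : M₀.getLast hM₀ne = σ' := by
      have h' := List.getLast?_eq_getLast hM₀ne
      rw [hlast?] at h'
      exact (Option.some.inj h').symm
    have hM₀eq : M₀.dropLast ++ [σ'] = M₀ := by
      rw [← hglv]; exact List.dropLast_append_getLast hM₀ne
    set mid := M₀.dropLast with hmiddef
    have hMnd : (σ :: (mid ++ [σ'])).Nodup := by rw [hM₀eq]; exact hM.2.1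
    have hσmid : σ ∉ mid := by
      have := (List.nodup_cons.mp hMnd).1
      intro h; exact this (List.mem_append_left _ h)
    have hσ'mid : σ' ∉ mid := by
      have := (List.nodup_cons.mp hMnd).2
      intro h
      exact (List.nodup_append'.mp this).2.2 h (by simp)
    have hmidApp : ∀ z ∈ mid, Appendage E ι o z := by
      intro z hz
      have hzM : z ∈ σ :: M₀ := by
        rw [← hM₀eq]
        exact List.mem_cons_of_mem _ (List.mem_append_left _ hz)
      rcases hMApp z hzM with rfl | rfl | h
      · exact absurd hz hσmid
      · exact absurd hz hσ'mid
      · exact h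
    have hxmid : x ∈ mid := by
      have : x ∈ σ :: M₀ := hxM
      rw [← hM₀eq] at this
      rcases List.mem_cons.mp this with h | h
      · exact absurd h hxσ
      rcases List.mem_append.mp h with h | h
      · exact h
      · simp at h; exact absurd h hxσ'
    have hσ'P5 : σ' ∈ P5 := NFAO.spath_head_mem hP5
    -- glue P1 with the middle
    have hMpath : IsSPath E σ σ' (σ :: (mid ++ [σ'])) := by rw [hM₀eq]; exact hM
    have hnd1 : (P1 ++ (mid ++ [σ'])).Nodup := by
      rw [List.nodup_append']
      refine ⟨hP1.2.1, (List.nodup_cons.mp hMnd).2, ?_⟩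
      intro z hz1 hz2
      rcases List.mem_append.mp hz2 with h | h
      · exact hmidApp z h (hP1s z hz1)
      · simp at h
        exact hint ⟨σ', h ▸ hz1, hσ'P5⟩
    have hL1 : IsSPath E ι σ' (P1 ++ (mid ++ [σ'])) :=
      NFAO.spath_append hP1 hMpath hnd1
    obtain ⟨t₅, rfl⟩ : ∃ t₅, P5 = σ' :: t₅ := by
      cases P5 with
      | nil => exact absurd hP5.2.2.1 (by simp)
      | cons u t₅ =>
        have hu : u = σ' := by have := hP5.2.2.1; simpa using this
        exact ⟨t₅, by rw [hu]⟩
    have hσ't₅ : σ' ∉ t₅ := (List.nodup_cons.mp hP5.2.1).1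
    have hndW : ((P1 ++ (mid ++ [σ'])) ++ t₅).Nodup := by
      rw [List.nodup_append']
      refine ⟨hnd1, (List.nodup_cons.mp hP5.2.1).2, ?_⟩
      intro z hz1 hz2
      have hz5 : z ∈ σ' :: t₅ := List.mem_cons_of_mem _ hz2
      rcases List.mem_append.mp hz1 with h | h
      · exact hint ⟨z, h, hz5⟩
      rcases List.mem_append.mp h with h | h
      · exact hmidApp z h (hP5s z hz5)
      · simp at h; exact hσ't₅ (h ▸ hz2)
    have hW : IsSPath E ι o ((P1 ++ (mid ++ [σ'])) ++ t₅) :=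
      NFAO.spath_append hL1 hP5 hndW
    have hxW : x ∈ (P1 ++ (mid ++ [σ'])) ++ t₅ :=
      List.mem_append_left _ (List.mem_append_right _ (List.mem_append_left _ hxmid))
    exact hxApp ⟨_, hW, hxW⟩
end

section
/- Let G be a core input-output network with super-simple nodes ρ₀ = ι ≺ ρ₁ ≺ ⋯ ≺ ρ_{q+1} = o. Then every ιo-simple path decomposes uniquely as a concatenation ι ⇝ ρ₁ ⇝ ρ₂ ⇝ ⋯ ⇝ ρ_q ⇝ o of simple path segments between consecutive super-simple nodes, and each intermediate node of the segment ρ_{j-1} ⇝ ρ_j is a simple node σ with ρ_{j-1} ≺ σ ≺ ρ_j. -/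
section Helpers
variable {V : Type*} {E : V → V → Prop}

private lemma pair_sublist_of_indexOf [DecidableEq V] :
    ∀ {p : List V} {x y : V}, x ∈ p → y ∈ p → p.idxOf x < p.idxOf y →
      [x, y].Sublist p := by
  intro p
  induction p with
  | nil => intro x y hx _ _; simp at hx
  | cons a l ih =>
    intro x y hx hy h
    by_cases hxa : x = a
    · subst hxa
      have hya : y ≠ x := by
        intro h'; rw [h', List.idxOf_cons_self] at h; omega
      have hyl : y ∈ l := by
        rcases List.mem_cons.1 hy with h' | h'
        · exact absurd h' hya
        · exact h'
      exact (List.singleton_sublist.2 hyl).cons₂ x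
    · have hxl : x ∈ l := by
        rcases List.mem_cons.1 hx with h' | h'
        · exact absurd h' hxa
        · exact h'
      have hya : y ≠ a := by
        rintro rfl
        rw [List.idxOf_cons_self] at h; omega
      have hyl : y ∈ l := by
        rcases List.mem_cons.1 hy with h' | h'
        · exact absurd h' hya
        · exact h'
      have h' : l.idxOf x < l.idxOf y := by
        rw [List.idxOf_cons_ne _ (fun hh => hxa hh.symm),
          List.idxOf_cons_ne _ (fun hh => hya hh.symm)] at h
        omega
      exact (ih hxl hyl h').cons a

private lemma indexOf_lt_of_pair_sublist [DecidableEq V] {p : List V} {x y : V}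
    (hnd : p.Nodup) (h : [x, y].Sublist p) : p.idxOf x < p.idxOf y := by
  obtain ⟨r₁, r₂, rfl, hx, hy'⟩ := List.cons_sublist_iff.1 h
  have hy : y ∈ r₂ := List.singleton_sublist.1 hy'
  rw [List.nodup_append] at hnd
  have hynr : y ∉ r₁ := fun hy1 => hnd.2.2 y hy1 y hy rfl
  rw [List.idxOf_append_of_mem hx, List.idxOf_append_of_notMem hynr]
  have := List.idxOf_lt_length_iff.2 hx
  omega

/-- Extract a nodup chain (simple path) from a walk, with the same endpoints
and nodes among the walk's nodes. -/
private lemma exists_nodup_chain :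
    ∀ (n : ℕ) (w : List V), w.length ≤ n → w.Chain' E → w ≠ [] →
      ∃ q : List V, q.Chain' E ∧ q.Nodup ∧ q.head? = w.head? ∧
        q.getLast? = w.getLast? ∧ ∀ x ∈ q, x ∈ w := by
  intro n
  induction n with
  | zero =>
    intro w hw _ hne
    cases w with
    | nil => exact absurd rfl hne
    | cons a l => simp at hw
  | succ n ih =>
    intro w hw hc hne
    by_cases hnd : w.Nodup
    · exact ⟨w, hc, hnd, rfl, rfl, fun x hx => hx⟩
    · obtain ⟨a, ha⟩ := List.exists_duplicate_iff_not_nodup.2 hnd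
      rw [List.duplicate_iff_sublist] at ha
      obtain ⟨r₁, r₂, hw', ha1, ha2⟩ := List.cons_sublist_iff.1 ha
      obtain ⟨s₁, s₂, rfl⟩ := List.append_of_mem ha1
      obtain ⟨t₁, t₂, rfl⟩ := List.append_of_mem (List.singleton_sublist.1 ha2)
      set m := s₂ ++ t₁ with hm
      have hwform : w = s₁ ++ a :: (m ++ a :: t₂) := by
        simp [hw', hm, List.append_assoc]
      rw [hwform] at hc
      rw [List.Chain', List.isChain_append] at hc
      obtain ⟨hc1, hc2, hc3⟩ := hc
      have hc2' : List.Chain' E (a :: t₂) := by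
        have : a :: (m ++ a :: t₂) = (a :: m) ++ (a :: t₂) := by simp
        rw [this, List.isChain_append] at hc2
        exact hc2.2.1
      have hchain' : List.Chain' E (s₁ ++ a :: t₂) := by
        rw [List.Chain', List.isChain_append]
        refine ⟨hc1, hc2', fun x hx y hy => ?_⟩
        simp only [List.head?_cons, Option.mem_some_iff] at hy
        subst hy
        exact hc3 x hx a (by simp)
      have hlen : (s₁ ++ a :: t₂).length ≤ n := by
        have h1 : w.length = s₁.length + 1 + m.length + 1 + t₂.length := by
          rw [hwform]; simp; omega
        have h2 : (s₁ ++ a :: t₂).length = s₁.length + 1 + t₂.length := by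
          simp; omega
        omega
      obtain ⟨q, hq1, hq2, hq3, hq4, hq5⟩ :=
        ih (s₁ ++ a :: t₂) hlen hchain' (by simp)
      refine ⟨q, hq1, hq2, ?_, ?_, fun x hx => ?_⟩
      · rw [hq3, hwform]; cases s₁ <;> simp
      · rw [hq4, hwform, List.getLast?_append_of_ne_nil s₁ (by simp),
          List.getLast?_append_of_ne_nil s₁ (by simp),
          show a :: (m ++ a :: t₂) = (a :: m) ++ (a :: t₂) by simp,
          List.getLast?_append_of_ne_nil (a :: m) (by simp)]
      · have := hq5 x hx
        rw [hwform]
        simp only [List.mem_append, List.mem_cons] at this ⊢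
        tauto


private lemma order_consistent {ι o a b : V}
    (ha : SuperSimple E ι o a) {p' q : List V}
    (hp' : IoSPath E ι o p') (hq : IoSPath E ι o q)
    (h1 : [a, b].Sublist p') (h2 : [b, a].Sublist q) : False := by
  obtain ⟨r₁, r₂, hqe, hbr₁, har₂'⟩ := List.cons_sublist_iff.1 h2
  have har₂ : a ∈ r₂ := List.singleton_sublist.1 har₂'
  obtain ⟨u, v, rfl⟩ := List.append_of_mem hbr₁
  obtain ⟨c₁, c₂, hpe, hac₁, hbc₂'⟩ := List.cons_sublist_iff.1 h1
  have hbc₂ : b ∈ c₂ := List.singleton_sublist.1 hbc₂'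
  obtain ⟨w₁, w₂, rfl⟩ := List.append_of_mem hbc₂
  have hqform : q = u ++ b :: (v ++ r₂) := by rw [hqe]; simp
  have hpform : p' = (c₁ ++ w₁) ++ b :: w₂ := by rw [hpe]; simp
  -- chain facts
  have hqc : List.Chain' E (u ++ b :: (v ++ r₂)) := by rw [← hqform]; exact hq.1
  rw [List.Chain', List.isChain_append] at hqc
  have hpc : List.Chain' E ((c₁ ++ w₁) ++ b :: w₂) := by rw [← hpform]; exact hp'.1
  rw [List.Chain', List.isChain_append] at hpc
  have hWchain : List.Chain' E (u ++ b :: w₂) := by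
    rw [List.Chain', List.isChain_append]
    refine ⟨hqc.1, hpc.2.1, fun x hx y hy => ?_⟩
    simp only [List.head?_cons, Option.mem_some_iff] at hy
    subst hy
    exact hqc.2.2 x hx b (by simp)
  have hWhead : (u ++ b :: w₂).head? = q.head? := by
    rw [hqform]; cases u <;> simp
  have hWlast : (u ++ b :: w₂).getLast? = p'.getLast? := by
    rw [List.getLast?_append_of_ne_nil u (by simp), hpform,
      List.getLast?_append_of_ne_nil _ (by simp)]
  -- a is not on the walk
  have hqnd : (u ++ b :: (v ++ r₂)).Nodup := by rw [← hqform]; exact hq.2.1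
  rw [List.nodup_append] at hqnd
  have hau : a ∉ u := fun hau =>
    hqnd.2.2 a hau a (List.mem_cons.2 (Or.inr (List.mem_append.2 (Or.inr har₂)))) rfl
  have hab : a ≠ b := by
    rintro rfl
    exact (List.nodup_cons.1 hqnd.2.1).1 (by simp [har₂])
  have hpnd : ((c₁ ++ w₁) ++ b :: w₂).Nodup := by rw [← hpform]; exact hp'.2.1
  rw [List.nodup_append] at hpnd
  have haw₂ : a ∉ w₂ := fun h =>
    hpnd.2.2 a (List.mem_append.2 (Or.inl hac₁)) a (List.mem_cons.2 (Or.inr h)) rfl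
  -- extract a simple path and contradict super-simplicity of `a`
  obtain ⟨q', h1', h2', h3', h4', h5'⟩ :=
    exists_nodup_chain (E := E) (u ++ b :: w₂).length (u ++ b :: w₂) le_rfl
      hWchain (by simp)
  have hq'path : IoSPath E ι o q' :=
    ⟨h1', h2', by rw [h3', hWhead]; exact hq.2.2.1,
      by rw [h4', hWlast]; exact hp'.2.2.2⟩
  have haq' : a ∈ q' := ha q' hq'path
  have haW : a ∈ u ++ b :: w₂ := h5' a haq'
  simp only [List.mem_append, List.mem_cons] at haW
  tauto

private lemma ne_of_occBefore {ι o a b : V} (h : OccBefore E ι o a b) : a ≠ b := by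
  rintro rfl
  obtain ⟨p', hp', hsub⟩ := h
  exact List.nodup_iff_sublist.1 hp'.2.1 a hsub

private lemma idx_le_of_wocc [DecidableEq V] {ι o : V} {p : List V}
    (hp : IoSPath E ι o p) {x y : V}
    (hx : SuperSimple E ι o x) (hy : SuperSimple E ι o y)
    (h : x = y ∨ OccBefore E ι o x y) : p.idxOf x ≤ p.idxOf y := by
  rcases h with rfl | h
  · exact le_rfl
  · obtain ⟨p'', hp'', hsub⟩ := h
    by_contra hlt
    push_neg at hlt
    have hxp : x ∈ p := hx p hp
    have hyp : y ∈ p := hy p hp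
    exact order_consistent hx hp'' hp hsub
      (pair_sublist_of_indexOf hyp hxp hlt)

private lemma idx_lt_of_slt [DecidableEq V] {ι o : V} {p : List V}
    (hp : IoSPath E ι o p) {x y : V}
    (hx : SuperSimple E ι o x) (hy : SuperSimple E ι o y)
    (h : SLt E ι o x y) : p.idxOf x < p.idxOf y := by
  obtain ⟨hne, ρ₀, hρ₀, h1, h2⟩ := h
  have l1 := idx_le_of_wocc hp hx hρ₀ h1
  have l2 := idx_le_of_wocc hp hρ₀ hy (h2.imp Eq.symm id)
  have hxp : x ∈ p := hx p hp
  have hyp : y ∈ p := hy p hp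
  have : p.idxOf x ≠ p.idxOf y := fun h => hne ((List.idxOf_inj hxp).1 h)
  omega

end Helpers

/-- Every `ιo`-simple path decomposes (uniquely) along adjacent super-simple
nodes: every non-super-simple node `σ` on the path lies strictly between a
unique pair of adjacent super-simple nodes `ρ ≺ ρ'` on the path, and
satisfies `ρ ≺ σ ≺ ρ'`. -/



theorem path_decomposition {V : Type*} (E : V → V → Prop) (ι o : V)
    (hcore : Core E ι o) :
    ∀ p, IoSPath E ι o p → ∀ σ ∈ p, ¬ SuperSimple E ι o σ →
      ∃! rr : V × V, AdjSS E ι o rr.1 rr.2 ∧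
        [rr.1, σ].Sublist p ∧ [σ, rr.2].Sublist p ∧
        SimpleNode E ι o σ ∧ SLt E ι o rr.1 σ ∧ SLt E ι o σ rr.2 := by
  classical
  intro p hp σ hσp hσss
  have hιss : SuperSimple E ι o ι := fun q hq =>
    List.mem_of_mem_head? (Option.mem_def.mpr hq.2.2.1)
  have hoss : SuperSimple E ι o o := fun q hq =>
    List.mem_of_mem_getLast? (Option.mem_def.mpr hq.2.2.2)
  have hnd := hp.2.1
  have hσι : σ ≠ ι := fun h => hσss (by rw [h]; exact hιss)
  have hσo : σ ≠ o := fun h => hσss (by rw [h]; exact hoss)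
  have hιp : ι ∈ p := hιss p hp
  have hop : o ∈ p := hoss p hp
  have hidxι : p.idxOf ι = 0 := by
    cases p with
    | nil => simp at hιp
    | cons a t =>
      have ha : a = ι := by simpa using hp.2.2.1
      rw [ha, List.idxOf_cons_self]
  have hidxo : ∀ x ∈ p, x ≠ o → p.idxOf x < p.idxOf o := by
    intro x hxp hxo
    have hpne : p ≠ [] := by rintro rfl; simp at hιp
    have hform : p.dropLast ++ [p.getLast hpne] = p := List.dropLast_append_getLast hpne
    have hgl : p.getLast hpne = o := by
      have h1 : p.getLast? = some (p.getLast hpne) := List.getLast?_eq_getLast hpne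
      rw [hp.2.2.2] at h1
      exact (Option.some_injective _ h1).symm
    rw [hgl] at hform
    have hnd' : (p.dropLast ++ [o]).Nodup := by rw [hform]; exact hnd
    rw [List.nodup_append] at hnd'
    have hxdl : x ∈ p.dropLast := by
      have hx' := hxp
      rw [← hform] at hx'
      rcases List.mem_append.1 hx' with h | h
      · exact h
      · simp at h; exact absurd h hxo
    have hodl : o ∉ p.dropLast := fun h => hnd'.2.2 o h o (by simp) rfl
    rw [← hform, List.idxOf_append_of_mem hxdl, List.idxOf_append_of_notMem hodl]
    have hlen := List.idxOf_lt_length_iff.2 hxdl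
    simp only [List.idxOf_cons_self]
    omega
  have hi0 : 0 < p.idxOf σ := by
    rcases Nat.eq_zero_or_pos (p.idxOf σ) with h | h
    · exact absurd ((List.idxOf_inj hσp).1 (by rw [h, hidxι])) hσι
    · exact h
  have hio : p.idxOf σ < p.idxOf o := hidxo σ hσp hσo
  set P : ℕ → Prop := fun j => j < p.idxOf σ ∧
    ∃ x, SuperSimple E ι o x ∧ p.idxOf x = j with hP
  have hP0 : P 0 := ⟨hi0, ι, hιss, hidxι⟩
  have hPspec := Nat.findGreatest_spec (Nat.zero_le (p.idxOf σ)) hP0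
  set jρ := Nat.findGreatest P (p.idxOf σ) with hjρdef
  obtain ⟨hjρlt, ρ, hρss, hρidx⟩ := hPspec
  have hmax : ∀ x, SuperSimple E ι o x → p.idxOf x < p.idxOf σ →
      p.idxOf x ≤ jρ := by
    intro x hxss hxlt
    by_contra hgt
    push_neg at hgt
    exact Nat.findGreatest_is_greatest hgt (le_of_lt hxlt) ⟨hxlt, x, hxss, rfl⟩
  have hQex : ∃ j, p.idxOf σ < j ∧ ∃ x, SuperSimple E ι o x ∧ p.idxOf x = j :=
    ⟨p.idxOf o, hio, o, hoss, rfl⟩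
  set jρ' := Nat.find hQex with hjρ'def
  obtain ⟨hjρ'gt, ρ', hρ'ss, hρ'idx⟩ := Nat.find_spec hQex
  have hmin : ∀ x, SuperSimple E ι o x → p.idxOf σ < p.idxOf x →
      jρ' ≤ p.idxOf x :=
    fun x hxss hxgt => Nat.find_min' hQex ⟨hxgt, x, hxss, rfl⟩
  have hρp : ρ ∈ p := hρss p hp
  have hρ'p : ρ' ∈ p := hρ'ss p hp
  have hsρσ : [ρ, σ].Sublist p :=
    pair_sublist_of_indexOf hρp hσp (by rw [hρidx]; exact hjρlt)
  have hsσρ' : [σ, ρ'].Sublist p :=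
    pair_sublist_of_indexOf hσp hρ'p (by rw [hρ'idx]; exact hjρ'gt)
  have hsρρ' : [ρ, ρ'].Sublist p :=
    pair_sublist_of_indexOf hρp hρ'p (by rw [hρidx, hρ'idx]; omega)
  have hρσ : SLt E ι o ρ σ :=
    ⟨fun h => hσss (by rw [← h]; exact hρss), ρ, hρss, Or.inl rfl,
      Or.inr ⟨p, hp, hsρσ⟩⟩
  have hσρ' : SLt E ι o σ ρ' :=
    ⟨fun h => hσss (by rw [h]; exact hρ'ss), ρ', hρ'ss,
      Or.inr ⟨p, hp, hsσρ'⟩, Or.inl rfl⟩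
  have hρρ' : SLt E ι o ρ ρ' :=
    ⟨fun h => by rw [h, hρ'idx] at hρidx; omega, ρ, hρss, Or.inl rfl,
      Or.inr ⟨p, hp, hsρρ'⟩⟩
  have hadj : AdjSS E ι o ρ ρ' := by
    refine ⟨hρss, hρ'ss, hρρ', ?_⟩
    rintro ⟨ρ'', hss'', h12, h23⟩
    have hρ''p : ρ'' ∈ p := hss'' p hp
    have k12 : p.idxOf ρ < p.idxOf ρ'' := idx_lt_of_slt hp hρss hss'' h12
    have k23 : p.idxOf ρ'' < p.idxOf ρ' := idx_lt_of_slt hp hss'' hρ'ss h23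
    rw [hρidx] at k12
    rw [hρ'idx] at k23
    have hkσ : p.idxOf ρ'' ≠ p.idxOf σ := fun h =>
      hσss (by rw [← (List.idxOf_inj hρ''p).1 h]; exact hss'')
    rcases lt_or_gt_of_ne hkσ with h | h
    · have := hmax ρ'' hss'' h; omega
    · have := hmin ρ'' hss'' h; omega
  refine ⟨(ρ, ρ'), ⟨hadj, hsρσ, hsσρ', ⟨p, hp, hσp⟩, hρσ, hσρ'⟩, ?_⟩
  rintro ⟨r1, r2⟩ ⟨⟨hr1ss, hr2ss, hr12, hnr⟩, hs1, hs2, -, -, -⟩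
  dsimp only at hr1ss hr2ss hr12 hnr hs1 hs2 ⊢
  have hr1p : r1 ∈ p := hs1.subset (by simp)
  have hr2p : r2 ∈ p := hs2.subset (by simp)
  have hi1 : p.idxOf r1 < p.idxOf σ := indexOf_lt_of_pair_sublist hnd hs1
  have hi2 : p.idxOf σ < p.idxOf r2 := indexOf_lt_of_pair_sublist hnd hs2
  have hle1 : p.idxOf r1 ≤ jρ := hmax r1 hr1ss hi1
  have hge2 : jρ' ≤ p.idxOf r2 := hmin r2 hr2ss hi2
  have he1 : p.idxOf r1 = jρ := by
    by_contra hne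
    have hlt : p.idxOf r1 < p.idxOf ρ := by rw [hρidx]; omega
    refine hnr ⟨ρ, hρss, ⟨fun h => by rw [h] at hlt; omega, ρ, hρss,
      Or.inr ⟨p, hp, pair_sublist_of_indexOf hr1p hρp hlt⟩, Or.inl rfl⟩,
      ⟨fun h => by rw [← h, hρidx] at hi2; omega, ρ, hρss, Or.inl rfl,
      Or.inr ⟨p, hp, pair_sublist_of_indexOf hρp hr2p (by rw [hρidx]; omega)⟩⟩⟩
  have he2 : p.idxOf r2 = jρ' := by
    by_contra hne
    have hlt : jρ' < p.idxOf r2 := by omega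
    refine hnr ⟨ρ', hρ'ss, ⟨fun h => by rw [h, hρ'idx] at hi1; omega, ρ', hρ'ss,
      Or.inr ⟨p, hp, pair_sublist_of_indexOf hr1p hρ'p (by rw [hρ'idx]; omega)⟩,
      Or.inl rfl⟩,
      ⟨fun h => by rw [h] at hρ'idx; omega, ρ', hρ'ss, Or.inl rfl,
      Or.inr ⟨p, hp, pair_sublist_of_indexOf hρ'p hr2p (by rw [hρ'idx]; omega)⟩⟩⟩
  have hr1 : r1 = ρ := (List.idxOf_inj hr1p).1 (by rw [he1, hρidx])
  have hr2 : r2 = ρ' := (List.idxOf_inj hr2p).1 (by rw [he2, hρ'idx])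
  rw [hr1, hr2]
end
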